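/- Let k ≥ 1, let M and K be constant skew-symmetric real k×k matrices, δ > 0, H : ℝ^k → ℝ twice continuously differentiable, and let z : ℝ × ℝ × ℤ² → ℝ^k, (s,r,(i,j)) ↦ z_{i,j}(s,r), be differentiable in (s,r), satisfying for all (s,r) and all (i,j) ∈ ℤ² the centered box scheme M·(z̄⁰_{i+1,j} − z̄⁰_{i,j})/δ + K·(z̄¹_{i,j+1} − z̄¹_{i,j})/δ = ∇H(c_{i,j}), where z̄⁰_{i,j} = (z_{i,j} + z_{i,j+1})/2, z̄¹_{i,j} = (z_{i,j} + z_{i+1,j})/2, and c_{i,j} = (z_{i,j} + z_{i+1,j} + z_{i,j+1} + z_{i+1,j+1})/4. Define ω_{i,j}(s,r) = ⟨ M·∂_s z̄⁰_{i,j}, ∂_r z̄⁰_{i,j} ⟩ and κ_{i,j}(s,r) = ⟨ K·∂_s z̄¹_{i,j}, ∂_r z̄¹_{i,j} ⟩. Then the discrete multi-symplectic conservation law holds exactly: for all (s,r) and all (i,j), (ω_{i+1,j} − ω_{i,j})/δ + (κ_{i,j+1} − κ_{i,j})/δ = 0. -/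

import Mathlib

open Matrix

/-- Edge average along the second lattice direction:
`z̄⁰_{i,j} = (z_{i,j} + z_{i,j+1})/2`. -/
noncomputable def zbar0 (k : ℕ) (z : ℝ × ℝ → ℤ × ℤ → (Fin k → ℝ))
    (p : ℝ × ℝ) (i j : ℤ) : Fin k → ℝ :=
  (z p (i, j) + z p (i, j + 1)) / 2

/-- Edge average along the first lattice direction:
`z̄¹_{i,j} = (z_{i,j} + z_{i+1,j})/2`. -/
noncomputable def zbar1 (k : ℕ) (z : ℝ × ℝ → ℤ × ℤ → (Fin k → ℝ))
    (p : ℝ × ℝ) (i j : ℤ) : Fin k → ℝ :=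
  (z p (i, j) + z p (i + 1, j)) / 2

/-- Cell average `c_{i,j} = (z_{i,j} + z_{i+1,j} + z_{i,j+1} + z_{i+1,j+1})/4`. -/
noncomputable def cav (k : ℕ) (z : ℝ × ℝ → ℤ × ℤ → (Fin k → ℝ))
    (p : ℝ × ℝ) (i j : ℤ) : Fin k → ℝ :=
  (z p (i, j) + z p (i + 1, j) + z p (i, j + 1) + z p (i + 1, j + 1)) / 4

/-- The discrete 2-form `ω_{i,j} = ⟨M ∂_s z̄⁰_{i,j}, ∂_r z̄⁰_{i,j}⟩`. -/
noncomputable def omg (k : ℕ) (M : Matrix (Fin k) (Fin k) ℝ)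
    (z : ℝ × ℝ → ℤ × ℤ → (Fin k → ℝ)) (p : ℝ × ℝ) (i j : ℤ) : ℝ :=
  ∑ a, M.mulVec (fderiv ℝ (fun q => zbar0 k z q i j) p (1, 0)) a
      * fderiv ℝ (fun q => zbar0 k z q i j) p (0, 1) a

/-- The discrete 2-form `κ_{i,j} = ⟨K ∂_s z̄¹_{i,j}, ∂_r z̄¹_{i,j}⟩`. -/
noncomputable def kap (k : ℕ) (K : Matrix (Fin k) (Fin k) ℝ)
    (z : ℝ × ℝ → ℤ × ℤ → (Fin k → ℝ)) (p : ℝ × ℝ) (i j : ℤ) : ℝ :=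
  ∑ a, K.mulVec (fderiv ℝ (fun q => zbar1 k z q i j) p (1, 0)) a
      * fderiv ℝ (fun q => zbar1 k z q i j) p (0, 1) a

section pieces
variable {k : ℕ} (z : ℝ × ℝ → ℤ × ℤ → (Fin k → ℝ))
  (hz : ∀ ij : ℤ × ℤ, ContDiff ℝ 1 (fun p => z p ij)) (p : ℝ × ℝ)

include hz

omit hz in
lemma half_smul (v : Fin k → ℝ) : v / 2 = (2⁻¹ : ℝ) • v := by
  funext a; simp [Pi.smul_apply, div_eq_inv_mul]

omit hz in
lemma quarter_smul (v : Fin k → ℝ) : v / 4 = (4⁻¹ : ℝ) • v := by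
  funext a; simp [Pi.smul_apply, div_eq_inv_mul]

lemma hfd0 (i j : ℤ) : HasFDerivAt (fun q => zbar0 k z q i j)
    ((2⁻¹:ℝ) • (fderiv ℝ (fun q => z q (i,j)) p + fderiv ℝ (fun q => z q (i,j+1)) p)) p := by
  have h1 := (((hz (i,j)).differentiable one_ne_zero) p).hasFDerivAt
  have h2 := (((hz (i,j+1)).differentiable one_ne_zero) p).hasFDerivAt
  have h := (h1.add h2).const_smul (2⁻¹:ℝ)
  have hfun : (fun q => zbar0 k z q i j) = fun q => (2⁻¹:ℝ) • (z q (i,j) + z q (i,j+1)) := by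
    funext q; rw [zbar0, half_smul]
  rw [hfun]; exact h

lemma hfd1 (i j : ℤ) : HasFDerivAt (fun q => zbar1 k z q i j)
    ((2⁻¹:ℝ) • (fderiv ℝ (fun q => z q (i,j)) p + fderiv ℝ (fun q => z q (i+1,j)) p)) p := by
  have h1 := (((hz (i,j)).differentiable one_ne_zero) p).hasFDerivAt
  have h2 := (((hz (i+1,j)).differentiable one_ne_zero) p).hasFDerivAt
  have h := (h1.add h2).const_smul (2⁻¹:ℝ)
  have hfun : (fun q => zbar1 k z q i j) = fun q => (2⁻¹:ℝ) • (z q (i,j) + z q (i+1,j)) := by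
    funext q; rw [zbar1, half_smul]
  rw [hfun]; exact h

lemma hfdc (i j : ℤ) : HasFDerivAt (fun q => cav k z q i j)
    ((4⁻¹:ℝ) • (fderiv ℝ (fun q => z q (i,j)) p + fderiv ℝ (fun q => z q (i+1,j)) p
      + fderiv ℝ (fun q => z q (i,j+1)) p + fderiv ℝ (fun q => z q (i+1,j+1)) p)) p := by
  have h1 := (((hz (i,j)).differentiable one_ne_zero) p).hasFDerivAt
  have h2 := (((hz (i+1,j)).differentiable one_ne_zero) p).hasFDerivAt
  have h3 := (((hz (i,j+1)).differentiable one_ne_zero) p).hasFDerivAt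
  have h4 := (((hz (i+1,j+1)).differentiable one_ne_zero) p).hasFDerivAt
  have h := (((h1.add h2).add h3).add h4).const_smul (4⁻¹:ℝ)
  have hfun : (fun q => cav k z q i j)
      = fun q => (4⁻¹:ℝ) • (z q (i,j) + z q (i+1,j) + z q (i,j+1) + z q (i+1,j+1)) := by
    funext q; rw [cav, quarter_smul]
  rw [hfun]; exact h

-- averaging facts
lemma avg0 (i j : ℤ) (e : ℝ × ℝ) :
    fderiv ℝ (fun q => zbar0 k z q (i+1) j) p e + fderiv ℝ (fun q => zbar0 k z q i j) p e
      = (2:ℝ) • fderiv ℝ (fun q => cav k z q i j) p e := by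
  rw [(hfd0 z hz p (i+1) j).fderiv, (hfd0 z hz p i j).fderiv, (hfdc z hz p i j).fderiv]
  simp only [ContinuousLinearMap.smul_apply, ContinuousLinearMap.add_apply]
  module

lemma avg1 (i j : ℤ) (e : ℝ × ℝ) :
    fderiv ℝ (fun q => zbar1 k z q i (j+1)) p e + fderiv ℝ (fun q => zbar1 k z q i j) p e
      = (2:ℝ) • fderiv ℝ (fun q => cav k z q i j) p e := by
  rw [(hfd1 z hz p i (j+1)).fderiv, (hfd1 z hz p i j).fderiv, (hfdc z hz p i j).fderiv]
  simp only [ContinuousLinearMap.smul_apply, ContinuousLinearMap.add_apply]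
  module

end pieces

section scheme
variable {k : ℕ} {M K : Matrix (Fin k) (Fin k) ℝ} {δ : ℝ}
  {H : (Fin k → ℝ) → ℝ} (hH : ContDiff ℝ 2 H)
  (z : ℝ × ℝ → ℤ × ℤ → (Fin k → ℝ))
  (hz : ∀ ij : ℤ × ℤ, ContDiff ℝ 1 (fun p => z p ij))
  (hscheme : ∀ (p : ℝ × ℝ) (i j : ℤ),
      M.mulVec (δ⁻¹ • (zbar0 k z p (i + 1) j - zbar0 k z p i j))
        + K.mulVec (δ⁻¹ • (zbar1 k z p i (j + 1) - zbar1 k z p i j))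
        = fun a => fderiv ℝ H (cav k z p i j) (Pi.single a 1))

include hH hz hscheme in
/-- The differentiated scheme: for any direction `e`. -/
lemma diff_scheme (p : ℝ × ℝ) (i j : ℤ) (e : ℝ × ℝ) :
    M *ᵥ (δ⁻¹ • (fderiv ℝ (fun q => zbar0 k z q (i+1) j) p e
        - fderiv ℝ (fun q => zbar0 k z q i j) p e))
      + K *ᵥ (δ⁻¹ • (fderiv ℝ (fun q => zbar1 k z q i (j+1)) p e
        - fderiv ℝ (fun q => zbar1 k z q i j) p e))
    = fun a => fderiv ℝ (fderiv ℝ H) (cav k z p i j)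
        (fderiv ℝ (fun q => cav k z q i j) p e) (Pi.single a 1) := by
  classical
  set c := cav k z p i j with hc
  set f'' := fderiv ℝ (fderiv ℝ H) c with hf''
  have hH1 : ContDiff ℝ 1 (fderiv ℝ H) := hH.fderiv_right (by norm_num)
  have hdH : HasFDerivAt (fderiv ℝ H) f'' c := ((hH1.differentiable one_ne_zero) c).hasFDerivAt
  set L : ((Fin k → ℝ) →L[ℝ] ℝ) →L[ℝ] (Fin k → ℝ) :=
    ContinuousLinearMap.pi (fun a => ContinuousLinearMap.apply ℝ ℝ (Pi.single a 1)) with hL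
  -- continuous linear maps for mulVec
  set Mc : (Fin k → ℝ) →L[ℝ] (Fin k → ℝ) := LinearMap.toContinuousLinearMap (Matrix.mulVecLin M)
    with hMc
  set Kc : (Fin k → ℝ) →L[ℝ] (Fin k → ℝ) := LinearMap.toContinuousLinearMap (Matrix.mulVecLin K)
    with hKc
  have hMcx : ∀ x, Mc x = M *ᵥ x := fun x => by
    simp [hMc, Matrix.mulVecLin_apply]
  have hKcx : ∀ x, Kc x = K *ᵥ x := fun x => by
    simp [hKc, Matrix.mulVecLin_apply]
  -- derivative CLMs of the averages
  set D0 := fun i' j' => (2⁻¹:ℝ) • (fderiv ℝ (fun q => z q (i',j')) p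
      + fderiv ℝ (fun q => z q (i',j'+1)) p) with hD0
  set D1 := fun i' j' => (2⁻¹:ℝ) • (fderiv ℝ (fun q => z q (i',j')) p
      + fderiv ℝ (fun q => z q (i'+1,j')) p) with hD1
  have hcav := hfdc z hz p i j
  set Dc := (4⁻¹:ℝ) • (fderiv ℝ (fun q => z q (i,j)) p + fderiv ℝ (fun q => z q (i+1,j)) p
      + fderiv ℝ (fun q => z q (i,j+1)) p + fderiv ℝ (fun q => z q (i+1,j+1)) p) with hDc
  -- LHS has derivative
  have hA := Mc.hasFDerivAt.comp p
    (((hfd0 z hz p (i+1) j).sub (hfd0 z hz p i j)).const_smul δ⁻¹)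
  have hB := Kc.hasFDerivAt.comp p
    (((hfd1 z hz p i (j+1)).sub (hfd1 z hz p i j)).const_smul δ⁻¹)
  have hLHS := hA.add hB
  -- RHS has derivative
  have hg : HasFDerivAt (fun x => L (fderiv ℝ H x)) (L.comp f'') c := L.hasFDerivAt.comp c hdH
  have hRHS := hg.comp p hcav
  -- the two functions agree
  have hfun : ((fun x => L (fderiv ℝ H x)) ∘ fun q => cav k z q i j)
      = (Mc ∘ fun q => δ⁻¹ • (zbar0 k z q (i+1) j - zbar0 k z q i j))
        + (Kc ∘ fun q => δ⁻¹ • (zbar1 k z q i (j+1) - zbar1 k z q i j)) := by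
    funext q
    have hs := hscheme q i j
    simp only [Function.comp, Pi.add_apply, hMcx, hKcx, hL, ContinuousLinearMap.pi_apply,
      ContinuousLinearMap.apply_apply]
    exact (hs).symm
  have hEq : (L.comp f'').comp ((4⁻¹:ℝ) • (fderiv ℝ (fun q => z q (i,j)) p
        + fderiv ℝ (fun q => z q (i+1,j)) p + fderiv ℝ (fun q => z q (i,j+1)) p
        + fderiv ℝ (fun q => z q (i+1,j+1)) p))
      = Mc.comp (δ⁻¹ • (D0 (i+1) j - D0 i j)) + Kc.comp (δ⁻¹ • (D1 i (j+1) - D1 i j)) := by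
    have hRHS' : HasFDerivAt ((Mc ∘ fun q => δ⁻¹ • (zbar0 k z q (i+1) j - zbar0 k z q i j))
        + (Kc ∘ fun q => δ⁻¹ • (zbar1 k z q i (j+1) - zbar1 k z q i j)))
        ((L.comp f'').comp ((4⁻¹:ℝ) • (fderiv ℝ (fun q => z q (i,j)) p
        + fderiv ℝ (fun q => z q (i+1,j)) p + fderiv ℝ (fun q => z q (i,j+1)) p
        + fderiv ℝ (fun q => z q (i+1,j+1)) p))) p := by
      rw [← hfun]; exact hRHS
    exact hRHS'.unique hLHS
  -- apply both sides to e
  have := congrArg (fun (T : (ℝ × ℝ) →L[ℝ] (Fin k → ℝ)) => T e) hEq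
  simp only [ContinuousLinearMap.add_apply, ContinuousLinearMap.comp_apply,
    ContinuousLinearMap.smul_apply, ContinuousLinearMap.sub_apply] at this
  rw [(hfd0 z hz p (i+1) j).fderiv, (hfd0 z hz p i j).fderiv,
    (hfd1 z hz p i (j+1)).fderiv, (hfd1 z hz p i j).fderiv, (hfdc z hz p i j).fderiv]
  rw [hMcx, hKcx] at this
  rw [← this]
  simp [hL, ContinuousLinearMap.pi_apply, ContinuousLinearMap.apply_apply, hD0, hD1]

omit hH hz hscheme in
lemma dot_eval (T : (Fin k → ℝ) →L[ℝ] ℝ) (v : Fin k → ℝ) :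
    (fun a => T (Pi.single a 1)) ⬝ᵥ v = T v := by
  classical
  have hv : v = ∑ a, v a • (Pi.single a (1:ℝ) : Fin k → ℝ) := by
    funext b
    simp [Pi.single_apply, Finset.sum_apply]
  conv_rhs => rw [hv]
  rw [map_sum]
  simp only [_root_.map_smul, smul_eq_mul, dotProduct]
  exact Finset.sum_congr rfl fun a _ => mul_comm _ _

include hH in
lemma hess_symm_dot (c uc vc : Fin k → ℝ) :
    (fun a => fderiv ℝ (fderiv ℝ H) c uc (Pi.single a 1)) ⬝ᵥ vc
      = (fun a => fderiv ℝ (fderiv ℝ H) c vc (Pi.single a 1)) ⬝ᵥ uc := by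
  have hHd : Differentiable ℝ H := hH.differentiable (by norm_num)
  have hH1 : ContDiff ℝ 1 (fderiv ℝ H) := hH.fderiv_right (by norm_num)
  have hdH : HasFDerivAt (fderiv ℝ H) (fderiv ℝ (fderiv ℝ H) c) c :=
    ((hH1.differentiable one_ne_zero) c).hasFDerivAt
  have hs := second_derivative_symmetric (fun y => (hHd y).hasFDerivAt) hdH uc vc
  rw [dot_eval, dot_eval, hs]

end scheme


lemma box_alg {k : ℕ} (M K : Matrix (Fin k) (Fin k) ℝ) (hM : Mᵀ = -M) (hK : Kᵀ = -K)
    (δ : ℝ) (a1 a0 b1 b0 c1 c0 d1 d0 uc vc Su Sv : Fin k → ℝ)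
    (ha : a1 + a0 = (2:ℝ) • uc) (hb : b1 + b0 = (2:ℝ) • vc)
    (hc : c1 + c0 = (2:ℝ) • uc) (hd : d1 + d0 = (2:ℝ) • vc)
    (hEs : M *ᵥ (δ⁻¹ • (a1 - a0)) + K *ᵥ (δ⁻¹ • (c1 - c0)) = Su)
    (hEr : M *ᵥ (δ⁻¹ • (b1 - b0)) + K *ᵥ (δ⁻¹ • (d1 - d0)) = Sv)
    (hsym : Su ⬝ᵥ vc = Sv ⬝ᵥ uc) :
    δ⁻¹ * ((M *ᵥ a1) ⬝ᵥ b1 - (M *ᵥ a0) ⬝ᵥ b0)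
      + δ⁻¹ * ((K *ᵥ c1) ⬝ᵥ d1 - (K *ᵥ c0) ⬝ᵥ d0) = 0 := by
  have skew : ∀ (A : Matrix (Fin k) (Fin k) ℝ), Aᵀ = -A → ∀ x y : Fin k → ℝ,
      (A *ᵥ x) ⬝ᵥ y = -((A *ᵥ y) ⬝ᵥ x) := by
    intro A hA x y
    rw [dotProduct_comm, dotProduct_mulVec, ← mulVec_transpose, hA, neg_mulVec, neg_dotProduct]
  have E1 := congrArg (fun w => w ⬝ᵥ vc) hEs
  have E2 := congrArg (fun w => w ⬝ᵥ uc) hEr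
  simp only [add_dotProduct, Matrix.mulVec_smul, smul_dotProduct, smul_eq_mul] at E1 E2
  have two_smul_dot : ∀ x y : Fin k → ℝ, x ⬝ᵥ ((2:ℝ) • y) = 2 * (x ⬝ᵥ y) := by
    intro x y; rw [dotProduct_smul]; simp
  have hXa : (2:ℝ) * ((M *ᵥ (a1 - a0)) ⬝ᵥ vc)
      = (M *ᵥ a1) ⬝ᵥ b1 + (M *ᵥ a1) ⬝ᵥ b0 - (M *ᵥ a0) ⬝ᵥ b1 - (M *ᵥ a0) ⬝ᵥ b0 := by
    rw [← two_smul_dot, ← hb, Matrix.mulVec_sub, sub_dotProduct, dotProduct_add, dotProduct_add]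
    ring
  have hYc : (2:ℝ) * ((K *ᵥ (c1 - c0)) ⬝ᵥ vc)
      = (K *ᵥ c1) ⬝ᵥ d1 + (K *ᵥ c1) ⬝ᵥ d0 - (K *ᵥ c0) ⬝ᵥ d1 - (K *ᵥ c0) ⬝ᵥ d0 := by
    rw [← two_smul_dot, ← hd, Matrix.mulVec_sub, sub_dotProduct, dotProduct_add, dotProduct_add]
    ring
  have hXb : (2:ℝ) * ((M *ᵥ (b1 - b0)) ⬝ᵥ uc)
      = -((M *ᵥ a1) ⬝ᵥ b1) - (M *ᵥ a0) ⬝ᵥ b1 + (M *ᵥ a1) ⬝ᵥ b0 + (M *ᵥ a0) ⬝ᵥ b0 := by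
    rw [← two_smul_dot, ← ha, Matrix.mulVec_sub, sub_dotProduct, dotProduct_add, dotProduct_add,
      skew M hM b1 a1, skew M hM b1 a0, skew M hM b0 a1, skew M hM b0 a0]
    ring
  have hYd : (2:ℝ) * ((K *ᵥ (d1 - d0)) ⬝ᵥ uc)
      = -((K *ᵥ c1) ⬝ᵥ d1) - (K *ᵥ c0) ⬝ᵥ d1 + (K *ᵥ c1) ⬝ᵥ d0 + (K *ᵥ c0) ⬝ᵥ d0 := by
    rw [← two_smul_dot, ← hc, Matrix.mulVec_sub, sub_dotProduct, dotProduct_add, dotProduct_add,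
      skew K hK d1 c1, skew K hK d1 c0, skew K hK d0 c1, skew K hK d0 c0]
    ring
  linear_combination E1 - E2 + hsym + (δ⁻¹/2) * hXb - (δ⁻¹/2) * hXa + (δ⁻¹/2) * hYd - (δ⁻¹/2) * hYc


/-- **The centered box scheme is a multi-symplectic integrator.**  For a
Hamiltonian PDE `M ∂₀ζ + K ∂₁ζ = ∇H(ζ)` in 1+1 dimensions with `M, K`
constant skew-symmetric, if a two-parameter family of discrete solutions
satisfies the centered box scheme, then the discrete multi-symplectic
conservation law `(ω_{i+1,j} − ω_{i,j})/δ + (κ_{i,j+1} − κ_{i,j})/δ = 0`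
holds exactly. -/
theorem centered_box_multisymplectic
    (k : ℕ) (hk : 1 ≤ k)
    (M K : Matrix (Fin k) (Fin k) ℝ) (hM : Mᵀ = -M) (hK : Kᵀ = -K)
    (δ : ℝ) (hδ : 0 < δ)
    (H : (Fin k → ℝ) → ℝ) (hH : ContDiff ℝ 2 H)
    (z : ℝ × ℝ → ℤ × ℤ → (Fin k → ℝ))
    (hz : ∀ ij : ℤ × ℤ, ContDiff ℝ 1 (fun p => z p ij))
    (hscheme : ∀ (p : ℝ × ℝ) (i j : ℤ),
      M.mulVec (δ⁻¹ • (zbar0 k z p (i + 1) j - zbar0 k z p i j))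
        + K.mulVec (δ⁻¹ • (zbar1 k z p i (j + 1) - zbar1 k z p i j))
        = fun a => fderiv ℝ H (cav k z p i j) (Pi.single a 1)) :
    ∀ (p : ℝ × ℝ) (i j : ℤ),
      δ⁻¹ * (omg k M z p (i + 1) j - omg k M z p i j)
        + δ⁻¹ * (kap k K z p i (j + 1) - kap k K z p i j) = 0 := by
  intro p i j
  have h := box_alg M K hM hK δ
    (fderiv ℝ (fun q => zbar0 k z q (i+1) j) p (1,0))
    (fderiv ℝ (fun q => zbar0 k z q i j) p (1,0))
    (fderiv ℝ (fun q => zbar0 k z q (i+1) j) p (0,1))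
    (fderiv ℝ (fun q => zbar0 k z q i j) p (0,1))
    (fderiv ℝ (fun q => zbar1 k z q i (j+1)) p (1,0))
    (fderiv ℝ (fun q => zbar1 k z q i j) p (1,0))
    (fderiv ℝ (fun q => zbar1 k z q i (j+1)) p (0,1))
    (fderiv ℝ (fun q => zbar1 k z q i j) p (0,1))
    (fderiv ℝ (fun q => cav k z q i j) p (1,0))
    (fderiv ℝ (fun q => cav k z q i j) p (0,1))
    (fun a => fderiv ℝ (fderiv ℝ H) (cav k z p i j)
      (fderiv ℝ (fun q => cav k z q i j) p (1,0)) (Pi.single a 1))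
    (fun a => fderiv ℝ (fderiv ℝ H) (cav k z p i j)
      (fderiv ℝ (fun q => cav k z q i j) p (0,1)) (Pi.single a 1))
    (avg0 z hz p i j (1,0)) (avg0 z hz p i j (0,1))
    (avg1 z hz p i j (1,0)) (avg1 z hz p i j (0,1))
    (diff_scheme hH z hz hscheme p i j (1,0))
    (diff_scheme hH z hz hscheme p i j (0,1))
    (hess_symm_dot hH (cav k z p i j) _ _)
  simpa [omg, kap, dotProduct] using h
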